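/- arXiv:1808.08083 — 2 statements merged into one kernel-verified Lean document; each statement's English description precedes it below -/
import Mathlib

section
/- Let u : ℝ^d → ℝ be continuously differentiable with compact support, and V : ℝ^d → ℝ^d continuously differentiable and bounded with bounded derivative. Then the shape derivative of J(Ω_s) = ∫_{Ω_s} u dx at s = 0, where Ω_s = P_s(Ω) and P_s = id + s•V, equals ∫_Ω (∇u ⋅ V + u · div V) dx. -/
open MeasureTheory Polynomial

lemma contDiff_det' (d : ℕ) :
    ContDiff ℝ ⊤ (fun m : Fin d → Fin d → ℝ => Matrix.det (Matrix.of m)) := by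
  simp only [Matrix.det_apply']
  apply ContDiff.sum
  intro σ _
  apply ContDiff.mul contDiff_const
  apply contDiff_prod
  intro i _
  exact contDiff_apply_apply (𝕜 := ℝ) (E := ℝ) (σ i) i

lemma contDiff_phi (d : ℕ) :
    ContDiff ℝ ⊤ (fun p : ℝ × (Fin d → Fin d → ℝ) =>
      Matrix.det (1 + p.1 • Matrix.of p.2)) := by
  have hg : ContDiff ℝ ⊤ (fun p : ℝ × (Fin d → Fin d → ℝ) =>
      (fun i j => (1 + p.1 • Matrix.of p.2 : Matrix (Fin d) (Fin d) ℝ) i j)) := by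
    have : (fun p : ℝ × (Fin d → Fin d → ℝ) =>
        (fun i j => (1 + p.1 • Matrix.of p.2 : Matrix (Fin d) (Fin d) ℝ) i j))
        = fun p => (fun i j => (if i = j then (1:ℝ) else 0) + p.1 * p.2 i j) := by
      funext p i j
      simp [Matrix.add_apply, Matrix.one_apply, Matrix.smul_apply]
    rw [this]
    rw [contDiff_pi]; intro i; rw [contDiff_pi]; intro j
    exact contDiff_const.add (contDiff_fst.mul
      ((contDiff_apply_apply (𝕜 := ℝ) (E := ℝ) i j).comp contDiff_snd))
  exact (contDiff_det' d).comp hg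

lemma hasDerivAt_phi (d : ℕ) (M : Fin d → Fin d → ℝ) (s : ℝ) :
    HasDerivAt (fun t : ℝ => Matrix.det (1 + t • Matrix.of M))
      (fderiv ℝ (fun p : ℝ × (Fin d → Fin d → ℝ) =>
        Matrix.det (1 + p.1 • Matrix.of p.2)) (s, M) (1, 0)) s := by
  have h1 : HasDerivAt (fun t : ℝ => (t, M)) ((1 : ℝ), (0 : Fin d → Fin d → ℝ)) s :=
    HasDerivAt.prodMk (hasDerivAt_id s) (hasDerivAt_const s M)
  exact (((contDiff_phi d).differentiable (by simp) (s, M)).hasFDerivAt).comp_hasDerivAt s h1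

lemma phi_deriv_zero (d : ℕ) (M : Fin d → Fin d → ℝ) :
    fderiv ℝ (fun p : ℝ × (Fin d → Fin d → ℝ) =>
      Matrix.det (1 + p.1 • Matrix.of p.2)) (0, M) (1, 0)
      = Matrix.trace (Matrix.of M) := by
  have h2 : HasDerivAt (fun t : ℝ => Matrix.det (1 + t • Matrix.of M))
      (Matrix.trace (Matrix.of M)) 0 := by
    have heq : (fun t : ℝ => Matrix.det (1 + t • Matrix.of M))
        = fun t => 1 + Matrix.trace (Matrix.of M) * t
          + (Polynomial.eval t (Matrix.det (1 + (Polynomial.X : ℝ[X]) • (Matrix.of M).map Polynomial.C)).divX.divX) * t ^ 2 := by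
      funext t; exact Matrix.det_one_add_smul t (Matrix.of M)
    rw [heq]
    have ha : HasDerivAt (fun t : ℝ => 1 + Matrix.trace (Matrix.of M) * t)
        (Matrix.trace (Matrix.of M)) 0 := by
      simpa using ((hasDerivAt_id (0:ℝ)).const_mul (Matrix.trace (Matrix.of M))).const_add (1:ℝ)
    have hb : HasDerivAt (fun t : ℝ =>
        (Polynomial.eval t (Matrix.det (1 + (Polynomial.X : ℝ[X]) • (Matrix.of M).map Polynomial.C)).divX.divX) * t ^ 2) 0 0 := by
      have := (Polynomial.hasDerivAt (Matrix.det (1 + (Polynomial.X : ℝ[X]) • (Matrix.of M).map Polynomial.C)).divX.divX (0:ℝ)).mul (hasDerivAt_pow 2 (0:ℝ))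
      exact this.congr_deriv (by simp)
    exact (ha.add hb).congr_deriv (by simp)
  exact (hasDerivAt_phi d M 0).unique h2

lemma phi_bounds (d : ℕ) (R : ℝ) :
    ∃ ε : ℝ, 0 < ε ∧ ε ≤ 1 ∧ ∃ C₁ C₂ : ℝ, ∀ s : ℝ, |s| < ε → ∀ M : Fin d → Fin d → ℝ, ‖M‖ ≤ R →
      0 < Matrix.det (1 + s • Matrix.of M) ∧
      |Matrix.det (1 + s • Matrix.of M)| ≤ C₂ ∧
      |fderiv ℝ (fun p : ℝ × (Fin d → Fin d → ℝ) =>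
        Matrix.det (1 + p.1 • Matrix.of p.2)) (s, M) (1, 0)| ≤ C₁ := by
  set Φ : ℝ × (Fin d → Fin d → ℝ) → ℝ :=
    fun p => Matrix.det (1 + p.1 • Matrix.of p.2) with hΦdef
  have hΦc : Continuous Φ := (contDiff_phi d).continuous
  have hU : IsOpen (Φ ⁻¹' Set.Ioi 0) := (isOpen_Ioi).preimage hΦc
  have hsub : ({0} : Set ℝ) ×ˢ Metric.closedBall (0 : Fin d → Fin d → ℝ) R ⊆ Φ ⁻¹' Set.Ioi 0 := by
    rintro ⟨s, M⟩ ⟨hs, -⟩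
    simp only [Set.mem_singleton_iff] at hs
    subst hs
    simp [hΦdef]
  obtain ⟨u, v, huo, -, h0u, hbv, huv⟩ := generalized_tube_lemma isCompact_singleton
    (isCompact_closedBall (0 : Fin d → Fin d → ℝ) R) hU hsub
  obtain ⟨ε₀, hε₀, hball⟩ := Metric.isOpen_iff.1 huo 0 (h0u rfl)
  set K : Set (ℝ × (Fin d → Fin d → ℝ)) :=
    Metric.closedBall (0:ℝ) 1 ×ˢ Metric.closedBall (0 : Fin d → Fin d → ℝ) R with hKdef
  have hK : IsCompact K := (isCompact_closedBall _ _).prod (isCompact_closedBall _ _)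
  have hg₁ : Continuous fun p => fderiv ℝ Φ p (1, (0 : Fin d → Fin d → ℝ)) :=
    ((contDiff_phi d).continuous_fderiv (by simp)).clm_apply continuous_const
  obtain ⟨C₁, hC₁⟩ := hK.exists_bound_of_continuousOn hg₁.continuousOn
  obtain ⟨C₂, hC₂⟩ := hK.exists_bound_of_continuousOn hΦc.continuousOn
  refine ⟨min ε₀ 1, lt_min hε₀ one_pos, min_le_right _ _, C₁, C₂, fun s hs M hM => ?_⟩
  have hs1 : |s| ≤ 1 := le_of_lt (lt_of_lt_of_le hs (min_le_right _ _))
  have hsK : (s, M) ∈ K := by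
    constructor
    · simpa [Real.norm_eq_abs] using hs1
    · simpa using hM
  have hMv : M ∈ v := hbv (by simpa using hM)
  have hsu : s ∈ u := hball (by simpa [Real.norm_eq_abs] using lt_of_lt_of_le hs (min_le_left _ _))
  refine ⟨huv (Set.mk_mem_prod hsu hMv), ?_, ?_⟩
  · simpa [Real.norm_eq_abs, hΦdef] using hC₂ (s, M) hsK
  · simpa [Real.norm_eq_abs] using hC₁ (s, M) hsK

theorem shape_derivative_volume_integral
    (d : ℕ) (u : (Fin d → ℝ) → ℝ) (hu : ContDiff ℝ 1 u)
    (hu_supp : HasCompactSupport u)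
    (V : (Fin d → ℝ) → (Fin d → ℝ)) (hV : ContDiff ℝ 1 V)
    (CV : ℝ) (hVbd : ∀ x, ‖V x‖ ≤ CV) (CDV : ℝ) (hDVbd : ∀ x, ‖fderiv ℝ V x‖ ≤ CDV)
    (Ω : Set (Fin d → ℝ)) (hΩo : IsOpen Ω) (hΩb : Bornology.IsBounded Ω) :
    HasDerivAt (fun s : ℝ => ∫ x in (fun x => x + s • V x) '' Ω, u x)
      (∫ x in Ω,
        ((∑ i, fderiv ℝ u x (Pi.single i 1) * V x i)
          + u x * (∑ i, fderiv ℝ V x (Pi.single i 1) i))) 0 := by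
  classical
  set M : (Fin d → ℝ) → (Fin d → Fin d → ℝ) :=
    fun x i j => fderiv ℝ V x (Pi.single j 1) i with hM
  have hCDV0 : (0:ℝ) ≤ CDV := le_trans (norm_nonneg _) (hDVbd 0)
  have hCV0 : (0:ℝ) ≤ CV := le_trans (norm_nonneg _) (hVbd 0)
  -- matrix of the derivative
  have hsingle : ∀ j : Fin d, (Pi.single j 1 : Fin d → ℝ)
      = fun j' => if j' = j then 1 else 0 :=
    fun j => _root_.funext fun j' => by simp [Pi.single_apply]
  have hMmat : ∀ x, Matrix.of (M x) = LinearMap.toMatrix' ((fderiv ℝ V x : (Fin d → ℝ) →L[ℝ] (Fin d → ℝ)) : (Fin d → ℝ) →ₗ[ℝ] (Fin d → ℝ)) := by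
    intro x; ext i j
    rw [LinearMap.toMatrix'_apply]
    simp only [Matrix.of_apply, hM, ContinuousLinearMap.coe_coe]
  have hMnorm : ∀ x, ‖M x‖ ≤ CDV := by
    intro x
    rw [pi_norm_le_iff_of_nonneg hCDV0]
    intro i
    rw [pi_norm_le_iff_of_nonneg hCDV0]
    intro j
    calc ‖fderiv ℝ V x (Pi.single j 1) i‖ ≤ ‖fderiv ℝ V x (Pi.single j 1)‖ :=
          norm_le_pi_norm _ i
      _ ≤ ‖fderiv ℝ V x‖ * ‖(Pi.single j 1 : Fin d → ℝ)‖ := (fderiv ℝ V x).le_opNorm _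
      _ = ‖fderiv ℝ V x‖ := by rw [Pi.norm_single]; simp
      _ ≤ CDV := hDVbd x
  have hMcont : Continuous M := by
    apply continuous_pi; intro i; apply continuous_pi; intro j
    exact (continuous_apply i).comp
      (((hV.continuous_fderiv one_ne_zero).clm_apply continuous_const))
  -- bounds for u and its derivative
  obtain ⟨Cu, hCu⟩ := hu_supp.exists_bound_of_continuous hu.continuous
  obtain ⟨Cu', hCu'⟩ := (hu_supp.fderiv ℝ).exists_bound_of_continuous
    (hu.continuous_fderiv one_ne_zero)
  -- epsilon from phi bounds plus injectivity
  obtain ⟨ε₀, hε₀, hε₀1, C₁, C₂, hphi⟩ := phi_bounds d CDV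
  set ε : ℝ := min ε₀ (1 / (CDV + 1)) with hεdef
  have hεpos : 0 < ε := lt_min hε₀ (by positivity)
  have hεε₀ : ε ≤ ε₀ := min_le_left _ _
  -- V is Lipschitz
  have hVlip : LipschitzWith (Real.toNNReal CDV) V := by
    apply lipschitzWith_of_nnnorm_fderiv_le (hV.differentiable one_ne_zero)
    intro x
    rw [← NNReal.coe_le_coe]
    simpa [Real.coe_toNNReal _ hCDV0] using hDVbd x
  -- injectivity of x ↦ x + s • V x for |s| < ε
  have hinj : ∀ s : ℝ, |s| < ε → Function.Injective (fun x : Fin d → ℝ => x + s • V x) := by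
    intro s hs x y hxy
    by_contra hne
    have h1 : x - y = s • (V y - V x) := by
      have := hxy
      simp only [] at this
      have h' : x - y = s • V y - s • V x := by
        apply sub_eq_sub_iff_add_eq_add.2
        linear_combination (norm := abel) this
      rw [h', smul_sub]
    have h2 : ‖x - y‖ ≤ |s| * (CDV * ‖x - y‖) := by
      calc ‖x - y‖ = |s| * ‖V y - V x‖ := by rw [h1, norm_smul, Real.norm_eq_abs]
        _ ≤ |s| * (CDV * ‖x - y‖) := by
            apply mul_le_mul_of_nonneg_left _ (abs_nonneg s)
            have := hVlip.dist_le_mul y x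
            rw [dist_eq_norm, dist_eq_norm] at this
            calc ‖V y - V x‖ ≤ CDV * ‖y - x‖ := by
                  simpa [Real.coe_toNNReal _ hCDV0] using this
              _ = CDV * ‖x - y‖ := by rw [norm_sub_rev]
    have hxy0 : 0 < ‖x - y‖ := by
      rw [norm_pos_iff]; exact sub_ne_zero.2 hne
    have hsCDV : |s| * CDV < 1 := by
      have hsle : |s| < 1 / (CDV + 1) := lt_of_lt_of_le hs (min_le_right _ _)
      calc |s| * CDV ≤ (1 / (CDV + 1)) * CDV := by
            apply mul_le_mul_of_nonneg_right (le_of_lt hsle) hCDV0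
        _ < 1 := by
            rw [div_mul_eq_mul_div, one_mul, div_lt_one (by positivity)]
            linarith
    nlinarith [h2, hxy0]
  -- the integrand after change of variables
  set Φ : ℝ × (Fin d → Fin d → ℝ) → ℝ :=
    fun p => Matrix.det (1 + p.1 • Matrix.of p.2) with hΦ
  set F : ℝ → (Fin d → ℝ) → ℝ := fun s x => Matrix.det (1 + s • Matrix.of (M x)) * u (x + s • V x)
    with hF
  set F' : ℝ → (Fin d → ℝ) → ℝ := fun s x =>
    (fderiv ℝ Φ (s, M x) (1, 0)) * u (x + s • V x)
      + Matrix.det (1 + s • Matrix.of (M x)) * (fderiv ℝ u (x + s • V x) (V x)) with hF'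
  -- change of variables
  have hchg : ∀ s : ℝ, |s| < ε →
      ∫ x in (fun x => x + s • V x) '' Ω, u x = ∫ x in Ω, F s x := by
    intro s hs
    have hf' : ∀ x ∈ Ω, HasFDerivWithinAt (fun x : Fin d → ℝ => x + s • V x)
        (ContinuousLinearMap.id ℝ (Fin d → ℝ) + s • fderiv ℝ V x) Ω x := by
      intro x _
      exact ((hasFDerivAt_id x).add
        (((hV.differentiable one_ne_zero x).hasFDerivAt).const_smul s)).hasFDerivWithinAt
    have := integral_image_eq_integral_abs_det_fderiv_smul volume hΩo.measurableSet hf'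
      ((hinj s hs).injOn) u
    rw [this]
    apply setIntegral_congr_fun hΩo.measurableSet
    intro x _
    beta_reduce
    have hdet : (ContinuousLinearMap.id ℝ (Fin d → ℝ) + s • fderiv ℝ V x).det
        = Matrix.det (1 + s • Matrix.of (M x)) := by
      rw [ContinuousLinearMap.det]
      rw [← LinearMap.det_toMatrix']
      congr 1
      rw [ContinuousLinearMap.coe_add, ContinuousLinearMap.coe_smul,
        ContinuousLinearMap.coe_id, map_add, _root_.map_smul, LinearMap.toMatrix'_id, hMmat]
    rw [hdet]
    have hpos := (hphi s (lt_of_lt_of_le hs hεε₀) (M x) (hMnorm x)).1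
    rw [abs_of_pos hpos, smul_eq_mul]
  -- differentiation under the integral sign
  have hmain : HasDerivAt (fun s => ∫ x in Ω, F s x) (∫ x in Ω, F' 0 x) 0 := by
    have hFcont : ∀ s, Continuous (F s) := by
      intro s
      apply Continuous.mul
      · exact (contDiff_phi d).continuous.comp (continuous_const.prodMk hMcont)
      · exact hu.continuous.comp (continuous_id.add (hV.continuous.fun_const_smul _))
    have hF'cont : Continuous (F' 0) := by
      apply Continuous.add
      · apply Continuous.mul
        · exact (((contDiff_phi d).continuous_fderiv (by simp)).comp
            (continuous_const.prodMk hMcont)).clm_apply continuous_const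
        · exact hu.continuous.comp (continuous_id.add (hV.continuous.fun_const_smul _))
      · apply Continuous.mul
        · exact (contDiff_phi d).continuous.comp (continuous_const.prodMk hMcont)
        · exact ((hu.continuous_fderiv one_ne_zero).comp
            (continuous_id.add (hV.continuous.fun_const_smul _))).clm_apply hV.continuous
    have hμ : volume Ω < ⊤ := hΩb.measure_lt_top
    have key := hasDerivAt_integral_of_dominated_loc_of_deriv_le (μ := volume.restrict Ω)
      (F := F) (F' := F') (x₀ := (0:ℝ)) (bound := fun _ => C₁ * Cu + C₂ * (Cu' * CV))
      (Metric.ball_mem_nhds (0:ℝ) hεpos)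
      (Filter.Eventually.of_forall fun s => (hFcont s).aestronglyMeasurable)
      ?_ (hF'cont.aestronglyMeasurable) ?_ ?_ ?_
    · exact key.2
    · -- integrability of F 0
      have : F 0 = u := by
        funext x; simp [hF]
      rw [this]
      exact (hu.continuous.integrable_of_hasCompactSupport hu_supp).restrict
    · -- bound
      apply Filter.Eventually.of_forall
      intro x s hs
      rw [Metric.mem_ball, Real.dist_0_eq_abs] at hs
      obtain ⟨-, hdet, hpsi⟩ := hphi s (lt_of_lt_of_le hs hεε₀) (M x) (hMnorm x)
      have h1 : ‖F' s x‖ ≤ |fderiv ℝ Φ (s, M x) (1, 0)| * |u (x + s • V x)|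
          + |Matrix.det (1 + s • Matrix.of (M x))| * |fderiv ℝ u (x + s • V x) (V x)| := by
        rw [Real.norm_eq_abs, hF']
        exact (abs_add_le _ _).trans (by rw [abs_mul, abs_mul])
      refine h1.trans (add_le_add ?_ ?_)
      · apply mul_le_mul hpsi _ (abs_nonneg _) ((abs_nonneg _).trans hpsi)
        simpa [Real.norm_eq_abs] using hCu (x + s • V x)
      · apply mul_le_mul hdet _ (abs_nonneg _) ((abs_nonneg _).trans hdet)
        calc |fderiv ℝ u (x + s • V x) (V x)|
            ≤ ‖fderiv ℝ u (x + s • V x)‖ * ‖V x‖ := by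
              simpa [Real.norm_eq_abs] using (fderiv ℝ u (x + s • V x)).le_opNorm (V x)
          _ ≤ Cu' * CV := mul_le_mul (hCu' _) (hVbd x) (norm_nonneg _)
              ((norm_nonneg (fderiv ℝ u (x + s • V x))).trans (hCu' (x + s • V x)))
    · -- integrability of the bound
      exact (integrableOn_const hμ.ne)
    · -- differentiability in s
      apply Filter.Eventually.of_forall
      intro x s hs
      have hpath : HasDerivAt (fun t : ℝ => x + t • V x) (V x) s := by
        simpa using ((hasDerivAt_id s).smul_const (V x)).const_add x
      have hu' : HasDerivAt (fun t : ℝ => u (x + t • V x))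
          (fderiv ℝ u (x + s • V x) (V x)) s :=
        ((hu.differentiable one_ne_zero _).hasFDerivAt).comp_hasDerivAt s hpath
      exact (hasDerivAt_phi d (M x) s).mul hu'
  -- assemble
  have heq2 : (∫ x in Ω, F' 0 x)
      = ∫ x in Ω, ((∑ i, fderiv ℝ u x (Pi.single i 1) * V x i)
          + u x * (∑ i, fderiv ℝ V x (Pi.single i 1) i)) := by
    apply setIntegral_congr_fun hΩo.measurableSet
    intro x _
    have h1 : F' 0 x = Matrix.trace (Matrix.of (M x)) * u x + fderiv ℝ u x (V x) := by
      simp only [hF']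
      rw [show fderiv ℝ Φ (0, M x) (1, 0) = _ from phi_deriv_zero d (M x)]
      simp
    rw [h1]
    have htr : Matrix.trace (Matrix.of (M x)) = ∑ i, fderiv ℝ V x (Pi.single i 1) i := by
      simp [Matrix.trace, Matrix.diag, hM]
    have hVsum : (V x : Fin d → ℝ) = ∑ i, V x i • (Pi.single i 1 : Fin d → ℝ) := by
      ext j
      rw [Finset.sum_apply]
      simp [Pi.single_apply]
    have hgrad : fderiv ℝ u x (V x) = ∑ i, fderiv ℝ u x (Pi.single i 1) * V x i := by
      conv_lhs => rw [hVsum]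
      rw [map_sum]
      exact Finset.sum_congr rfl fun i _ => by
        rw [_root_.map_smul, smul_eq_mul, mul_comm]
    rw [htr, hgrad]
    ring
  rw [← heq2]
  apply hmain.congr_of_eventuallyEq
  have : Metric.ball (0:ℝ) ε ∈ nhds (0:ℝ) := Metric.ball_mem_nhds _ hεpos
  filter_upwards [this] with s hs
  rw [Metric.mem_ball, Real.dist_0_eq_abs] at hs
  exact hchg s hs
end

section
/- Let V : ℝ^d → ℝ^d be C¹ with bounded derivative and let x ∈ ℝ^d. Denote by P_s^{-1} the inverse of P_s = id + s•V for small s. Then s ↦ P_s^{-1}(y) is differentiable at s = 0 for each y, with derivative -V(y). -/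
theorem inverse_map_deriv
    (d : ℕ) (V : (Fin d → ℝ) → (Fin d → ℝ)) (hV : ContDiff ℝ 1 V)
    (C : ℝ) (hC : ∀ x, ‖fderiv ℝ V x‖ ≤ C)
    (Q : ℝ → (Fin d → ℝ) → (Fin d → ℝ))
    (hQ : ∀ᶠ s in nhds (0 : ℝ),
      Function.LeftInverse (Q s) (fun x => x + s • V x) ∧
      Function.RightInverse (Q s) (fun x => x + s • V x)) :
    ∀ y : Fin d → ℝ, HasDerivAt (fun s => Q s y) (-V y) 0 := by
  intro y
  have hdiff : Differentiable ℝ V := hV.differentiable one_ne_zero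
  have hC0 : 0 ≤ C := le_trans (norm_nonneg _) (hC 0)
  have hlip : ∀ a b : Fin d → ℝ, ‖V a - V b‖ ≤ C * ‖a - b‖ := fun a b =>
    Convex.norm_image_sub_le_of_norm_fderiv_le
      (fun x _ => hdiff x) (fun x _ => hC x)
      convex_univ trivial trivial
  -- key identity: Q s y + s • V (Q s y) = y, eventually
  have hkey : ∀ᶠ s in nhds (0 : ℝ), Q s y + s • V (Q s y) = y := by
    filter_upwards [hQ] with s hs
    exact hs.2 y
  have hQ0 : Q 0 y = y := by
    have h0 := hkey.self_of_nhds
    simpa using h0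
  -- eventually, ‖Q s y - y‖ ≤ 2 * |s| * ‖V y‖
  have hsmall : ∀ᶠ s in nhds (0 : ℝ),
      ‖Q s y - y‖ ≤ 2 * |s| * ‖V y‖ := by
    have hball : ∀ᶠ s in nhds (0 : ℝ), |s| ≤ 1 / (2 * (C + 1)) := by
      have : (0 : ℝ) < 1 / (2 * (C + 1)) := by positivity
      have := Metric.ball_mem_nhds (0 : ℝ) this
      filter_upwards [this] with s hs
      rw [Metric.mem_ball, Real.dist_eq, sub_zero] at hs
      exact hs.le
    filter_upwards [hkey, hball] with s hs hsb
    have h1 : Q s y - y = -(s • V (Q s y)) := by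
      have := hs
      abel_nf
      linear_combination (norm := module) this
    have h2 : ‖Q s y - y‖ = |s| * ‖V (Q s y)‖ := by
      rw [h1, norm_neg, norm_smul, Real.norm_eq_abs]
    have h3 : ‖V (Q s y)‖ ≤ ‖V y‖ + C * ‖Q s y - y‖ := by
      have := hlip (Q s y) y
      calc ‖V (Q s y)‖ ≤ ‖V y‖ + ‖V (Q s y) - V y‖ := by
            have := norm_sub_norm_le (V (Q s y)) (V y); linarith [norm_sub_rev (V (Q s y)) (V y)]
        _ ≤ ‖V y‖ + C * ‖Q s y - y‖ := by linarith
    have hCs : |s| * C ≤ 1 / 2 := by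
      have h2C : (0:ℝ) < 2 * (C + 1) := by positivity
      have : |s| * (2 * (C + 1)) ≤ 1 := by
        calc |s| * (2 * (C + 1)) ≤ (1 / (2 * (C + 1))) * (2 * (C + 1)) := by
              apply mul_le_mul_of_nonneg_right hsb (le_of_lt h2C)
          _ = 1 := by field_simp
      nlinarith [abs_nonneg s]
    have h4 : ‖Q s y - y‖ ≤ |s| * ‖V y‖ + (1/2) * ‖Q s y - y‖ := by
      calc ‖Q s y - y‖ = |s| * ‖V (Q s y)‖ := h2
        _ ≤ |s| * (‖V y‖ + C * ‖Q s y - y‖) := by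
            apply mul_le_mul_of_nonneg_left h3 (abs_nonneg s)
        _ = |s| * ‖V y‖ + (|s| * C) * ‖Q s y - y‖ := by ring
        _ ≤ |s| * ‖V y‖ + (1/2) * ‖Q s y - y‖ := by
            nlinarith [norm_nonneg (Q s y - y)]
    linarith
  rw [hasDerivAt_iff_isLittleO_nhds_zero]
  have hbigO : (fun s : ℝ => Q (0 + s) y - Q 0 y - s • (-V y)) =O[nhds 0]
      fun s : ℝ => s ^ 2 := by
    rw [Asymptotics.isBigO_iff]
    refine ⟨2 * C * ‖V y‖ + 1, ?_⟩
    filter_upwards [hkey, hsmall] with s hs hsm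
    have h1 : Q s y - y = -(s • V (Q s y)) := by
      linear_combination (norm := module) hs
    have heq : Q (0 + s) y - Q 0 y - s • (-V y) = s • (V y - V (Q s y)) := by
      rw [zero_add, hQ0]
      rw [smul_sub]
      linear_combination (norm := module) h1
    rw [heq, norm_smul, Real.norm_eq_abs]
    have h5 : ‖V y - V (Q s y)‖ ≤ C * ‖Q s y - y‖ := by
      have := hlip y (Q s y)
      calc ‖V y - V (Q s y)‖ ≤ C * ‖y - Q s y‖ := this
        _ = C * ‖Q s y - y‖ := by rw [norm_sub_rev]
    calc |s| * ‖V y - V (Q s y)‖ ≤ |s| * (C * (2 * |s| * ‖V y‖)) := by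
          apply mul_le_mul_of_nonneg_left _ (abs_nonneg s)
          exact le_trans h5 (mul_le_mul_of_nonneg_left hsm hC0)
      _ = (2 * C * ‖V y‖) * (|s| * |s|) := by ring
      _ ≤ (2 * C * ‖V y‖ + 1) * ‖s ^ 2‖ := by
          have : |s| * |s| = ‖s ^ 2‖ := by
            rw [Real.norm_eq_abs, abs_of_nonneg (sq_nonneg s), sq, abs_mul_abs_self]
          rw [this]
          have : (0:ℝ) ≤ ‖s^2‖ := norm_nonneg _
          nlinarith [mul_nonneg hC0 (norm_nonneg (V y))]
  exact hbigO.trans_isLittleO (by simpa [sq] using Asymptotics.isLittleO_pow_id (𝕜 := ℝ) one_lt_two)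
end
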